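/- Let G be a countable discrete group, Σ = (σ_n : G → Sym(V_n)) a sofic approximation to G, A and B finite sets, μ a G-process on A^G, and (μ_n) a sequence of probability measures on A^{V_n} that locally weak* converges to μ over Σ. Let F ⊆ G be finite, let θ, κ : A^F → B, and let φ = θ ∘ π_F and ψ = κ ∘ π_F be the corresponding F-local observables A^G → B. Let c > 0 and let S_n ⊆ V_n be sets with |S_n| ≥ c·|V_n| for all n. Then for every ε > 0, for all sufficiently large n: (1/|S_n|)·| H(π_{S_n*}(φ^{σ_n})_* μ_n) − H(π_{S_n*}(ψ^{σ_n})_* μ_n) | ≤ d^Rok_μ(φ,ψ) + ε, where π_{S_n} : B^{V_n} → B^{S_n} is coordinate projection. -/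

import Mathlib

open MeasureTheory Filter

/-- Shannon entropy of a measure on a finite set, with the convention `0 * log 0 = 0`. -/
noncomputable def shannonEntropy {D : Type*} [Fintype D] [MeasurableSpace D]
    (η : Measure D) : ℝ :=
  -∑ d : D, (η {d}).toReal * Real.log (η {d}).toReal

/-- Shannon entropy `H_μ(α)` of a finite-valued observable: the entropy of the
pushforward measure `α_* μ`. -/
noncomputable def obsEntropy {X D : Type*} [MeasurableSpace X] [Fintype D] [MeasurableSpace D]
    (μ : Measure X) (α : X → D) : ℝ :=
  shannonEntropy (Measure.map α μ)

/-- Conditional Shannon entropy `H_μ(α | β) = H_μ((α,β)) - H_μ(β)`. -/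
noncomputable def condEntropyObs {X D E : Type*} [MeasurableSpace X]
    [Fintype D] [MeasurableSpace D] [Fintype E] [MeasurableSpace E]
    (μ : Measure X) (α : X → D) (β : X → E) : ℝ :=
  obsEntropy μ (fun x => (α x, β x)) - obsEntropy μ β

/-- The Rokhlin distance `d^Rok_μ(α, β) = H_μ(α|β) + H_μ(β|α)`. -/
noncomputable def rokDist {X D E : Type*} [MeasurableSpace X]
    [Fintype D] [MeasurableSpace D] [Fintype E] [MeasurableSpace E]
    (μ : Measure X) (α : X → D) (β : X → E) : ℝ :=
  condEntropyObs μ α β + condEntropyObs μ β α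

/-- `σ = (σ_n : G → Sym(V_n))` is a sofic approximation to `G`. -/
def IsSoficApprox {G : Type*} [Group G] {V : ℕ → Type*} [∀ n, Fintype (V n)]
    (σ : ∀ n, G → Equiv.Perm (V n)) : Prop :=
  Tendsto (fun n => Fintype.card (V n)) atTop atTop ∧
    (∀ g h : G,
      Tendsto (fun n =>
          (Nat.card {v : V n // σ n g (σ n h v) = σ n (g * h) v} : ℝ) /
            (Fintype.card (V n) : ℝ)) atTop (nhds 1)) ∧
    (∀ g : G, g ≠ 1 →
      Tendsto (fun n =>
          (Nat.card {v : V n // σ n g v = v} : ℝ) / (Fintype.card (V n) : ℝ))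
        atTop (nhds 0))

/-- Total variation distance between two measures on a finite set. -/
noncomputable def tvDist {D : Type*} [Fintype D] [MeasurableSpace D]
    (η₁ η₂ : Measure D) : ℝ :=
  (∑ d : D, |(η₁ {d}).toReal - (η₂ {d}).toReal|) / 2

/-- The sequence of measures `μn n` on `V n → A` locally weak* converges over the sofic
approximation `σ` to the measure `μ` on `A^G`: for every finite `F ⊆ G` and `δ > 0`,
eventually at least `(1-δ)|V_n|` of the `v ∈ V_n` satisfy
`‖(Π^{σ_n}_{v,F})_* μ_n − μ_F‖_TV < δ`. -/
def LocalWeakStarConverges {G : Type*} [Group G] [DecidableEq G] {V : ℕ → Type*}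
    [∀ n, Fintype (V n)] {A : Type*} [Fintype A] [MeasurableSpace A]
    (σ : ∀ n, G → Equiv.Perm (V n)) (μn : ∀ n, Measure (V n → A))
    (μ : Measure (G → A)) : Prop :=
  ∀ (F : Finset G) (δ : ℝ), 0 < δ → ∀ᶠ n in atTop,
    ((1 - δ) * (Fintype.card (V n) : ℝ)) ≤
      (Nat.card {v : V n //
        tvDist (Measure.map (fun (x : V n → A) (g : ↥F) => x (σ n g.1 v)) (μn n))
          (Measure.map (fun (a : G → A) (g : ↥F) => a g.1) μ) < δ} : ℝ)

set_option linter.unusedSectionVars false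

section AUX


/-- Log-sum inequality. -/
lemma logSum {ι : Type*} (s : Finset ι) (a b : ι → ℝ) (h0 : ∀ i ∈ s, 0 ≤ a i)
    (hab : ∀ i ∈ s, a i ≤ b i) :
    ∑ i ∈ s, a i * Real.log (b i / a i) ≤
      (∑ i ∈ s, a i) * Real.log ((∑ i ∈ s, b i) / (∑ i ∈ s, a i)) := by
  rcases eq_or_lt_of_le (Finset.sum_nonneg h0) with hA0 | hA0
  · have hz : ∀ i ∈ s, a i = 0 :=
      (Finset.sum_eq_zero_iff_of_nonneg h0).mp hA0.symm
    have : ∑ i ∈ s, a i * Real.log (b i / a i) = 0 :=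
      Finset.sum_eq_zero (fun i hi => by rw [hz i hi]; ring)
    rw [this, ← hA0]
    simp
  · set A := ∑ i ∈ s, a i with hA
    set Bs := ∑ i ∈ s, b i with hB
    have hB0 : 0 < Bs := lt_of_lt_of_le hA0 (Finset.sum_le_sum hab)
    have key : ∀ i ∈ s, a i * Real.log (b i / a i) ≤ b i * A / Bs - a i + a i * Real.log (Bs / A) := by
      intro i hi
      rcases eq_or_lt_of_le (h0 i hi) with h0i | h0i
      · rw [← h0i]
        have : 0 ≤ b i := le_trans (le_of_eq h0i) (hab i hi)
        have := div_nonneg (mul_nonneg this hA0.le) hB0.le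
        simpa using this
      · have hbi : 0 < b i := lt_of_lt_of_le h0i (hab i hi)
        have hx : 0 < b i * A / (a i * Bs) := by positivity
        have hlog := Real.log_le_sub_one_of_pos hx
        have e1 : Real.log (b i / a i) = Real.log (b i * A / (a i * Bs)) + Real.log (Bs / A) := by
          rw [← Real.log_mul (by positivity) (by positivity)]
          congr 1
          field_simp
        rw [e1, mul_add]
        have e2 : a i * Real.log (b i * A / (a i * Bs)) ≤ a i * (b i * A / (a i * Bs) - 1) :=
          mul_le_mul_of_nonneg_left hlog h0i.le
        have e3 : a i * (b i * A / (a i * Bs) - 1) = b i * A / Bs - a i := by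
          field_simp
        linarith [e2, e3.le]
    calc ∑ i ∈ s, a i * Real.log (b i / a i)
        ≤ ∑ i ∈ s, (b i * A / Bs - a i + a i * Real.log (Bs / A)) := Finset.sum_le_sum key
      _ = Bs * A / Bs - A + A * Real.log (Bs / A) := by
          rw [Finset.sum_add_distrib, Finset.sum_sub_distrib, ← Finset.sum_mul,
            ← Finset.sum_div, ← Finset.sum_mul]
      _ = A * Real.log (Bs / A) := by field_simp; ring

/-- Merging decreases entropy contribution (superadditivity of negMulLog). -/
lemma negMulLog_sum_le {ι : Type*} (s : Finset ι) (a : ι → ℝ) (h0 : ∀ i ∈ s, 0 ≤ a i) :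
    Real.negMulLog (∑ i ∈ s, a i) ≤ ∑ i ∈ s, Real.negMulLog (a i) := by
  set A := ∑ i ∈ s, a i with hA
  have key : ∀ i ∈ s, -(a i) * Real.log A ≤ Real.negMulLog (a i) := by
    intro i hi
    rcases eq_or_lt_of_le (h0 i hi) with h0i | h0i
    · rw [← h0i]; simp
    · have hle : a i ≤ A := Finset.single_le_sum h0 hi
      have : Real.log (a i) ≤ Real.log A := Real.log_le_log h0i hle
      rw [Real.negMulLog]
      nlinarith
  calc Real.negMulLog A = ∑ i ∈ s, (-(a i) * Real.log A) := by
        rw [Real.negMulLog, ← Finset.sum_neg_distrib, ← Finset.sum_mul]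
    _ ≤ ∑ i ∈ s, Real.negMulLog (a i) := Finset.sum_le_sum key

lemma gather {ι κ : Type*} [Fintype ι] [Fintype κ] [DecidableEq κ]
    (f : ι → κ) (p : ι → ℝ) (h0 : ∀ i, 0 ≤ p i) (P : κ → ℝ)
    (hP : ∀ k, P k = ∑ j ∈ Finset.univ.filter (fun j => f j = k), p j) :
    ∑ i, p i * Real.log (P (f i) / p i)
      = ∑ i, Real.negMulLog (p i) - ∑ k, Real.negMulLog (P k) := by
  have hPn : ∀ k, 0 ≤ P k := fun k => (hP k) ▸ Finset.sum_nonneg (fun j _ => h0 j)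
  have h1 : ∀ (g : ι → ℝ), ∑ i, g i
      = ∑ k, ∑ i ∈ Finset.univ.filter (fun i => f i = k), g i := by
    intro g
    rw [← Finset.sum_fiberwise Finset.univ f g]
  rw [h1 (fun i => p i * Real.log (P (f i) / p i)), h1 (fun i => Real.negMulLog (p i))]
  rw [← Finset.sum_sub_distrib]
  apply Finset.sum_congr rfl
  intro k _
  have key : ∀ i ∈ Finset.univ.filter (fun i => f i = k),
      p i * Real.log (P (f i) / p i) = p i * Real.log (P k) + Real.negMulLog (p i) := by
    intro i hi
    have hfi : f i = k := by simpa using hi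
    rcases eq_or_lt_of_le (h0 i) with h0i | h0i
    · rw [← h0i]; simp
    · have hle : p i ≤ P k := by
        rw [hP k]
        exact Finset.single_le_sum (fun j _ => h0 j) (by simpa using hfi)
      have hPk : 0 < P k := lt_of_lt_of_le h0i hle
      rw [hfi, Real.log_div (ne_of_gt hPk) (ne_of_gt h0i), Real.negMulLog]
      ring
  rw [Finset.sum_congr rfl key, Finset.sum_add_distrib, ← Finset.sum_mul, ← hP k,
    Real.negMulLog]
  ring


section fiberhelp
variable {D E E' : Type*} [Fintype D] [Fintype E] [Fintype E']
  [DecidableEq D] [DecidableEq E] [DecidableEq E']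

lemma fiber_prod_fst (u : E → E') (p : D × E → ℝ) (y : D × E') :
    ∑ z ∈ Finset.univ.filter (fun z : D × E => (z.1, u z.2) = y), p z
      = ∑ e ∈ Finset.univ.filter (fun e => u e = y.2), p (y.1, e) := by
  obtain ⟨d0, e0⟩ := y
  rw [Finset.sum_filter, Finset.sum_filter, Fintype.sum_prod_type]
  rw [Finset.sum_comm]
  apply Finset.sum_congr rfl
  intro e _
  by_cases h : u e = e0
  · simp [Prod.ext_iff, h]
  · simp [Prod.ext_iff, h]

lemma fiber_prod_usnd (u : E → E') (p : D × E → ℝ) (e' : E') :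
    ∑ z ∈ Finset.univ.filter (fun z : D × E => u z.2 = e'), p z
      = ∑ e ∈ Finset.univ.filter (fun e => u e = e'), ∑ d : D, p (d, e) := by
  rw [Finset.sum_filter, Finset.sum_filter, Fintype.sum_prod_type, Finset.sum_comm]
  apply Finset.sum_congr rfl
  intro e _
  by_cases h : u e = e'
  · simp [h]
  · simp [h]

lemma fiber_prod_snd (p : D × E → ℝ) (e : E) :
    ∑ z ∈ Finset.univ.filter (fun z : D × E => z.2 = e), p z = ∑ d : D, p (d, e) := by
  rw [Finset.sum_filter, Fintype.sum_prod_type, Finset.sum_comm]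
  rw [Fintype.sum_eq_single e (fun e' he' => by
    apply Finset.sum_eq_zero
    intro d _
    simp [he'])]
  simp

end fiberhelp

/-- Vector-level data processing: conditioning on a coarser observable increases
conditional entropy. `H(p) + H(Q) ≤ H(S) + H(q)`. -/
lemma dpVec {D E E' : Type*} [Fintype D] [Fintype E] [Fintype E']
    [DecidableEq D] [DecidableEq E']
    (u : E → E') (p : D × E → ℝ) (h0 : ∀ z, 0 ≤ p z) :
    (∑ z : D × E, Real.negMulLog (p z)) +
      (∑ e' : E', Real.negMulLog (∑ e ∈ Finset.univ.filter (fun e => u e = e'),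
        ∑ d : D, p (d, e))) ≤
    (∑ y : D × E', Real.negMulLog (∑ e ∈ Finset.univ.filter (fun e => u e = y.2), p (y.1, e))) +
      (∑ e : E, Real.negMulLog (∑ d : D, p (d, e))) := by
  classical
  set q : E → ℝ := fun e => ∑ d : D, p (d, e) with hq
  set Q : E' → ℝ := fun e' => ∑ e ∈ Finset.univ.filter (fun e => u e = e'), q e with hQ
  set S : D × E' → ℝ := fun y => ∑ e ∈ Finset.univ.filter (fun e => u e = y.2), p (y.1, e)
    with hS
  have hq0 : ∀ e, 0 ≤ q e := fun e => Finset.sum_nonneg (fun d _ => h0 _)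
  -- identity 1 : fibers of z ↦ (z.1, u z.2)
  have g1 := gather (fun z : D × E => (z.1, u z.2)) p h0 S
    (fun y => ((fiber_prod_fst u p y).symm : _))
  have g2 := gather u q hq0 Q (fun e' => by simp only [hQ])
  -- per-e log-sum
  have main : ∑ z : D × E, p z * Real.log (S (z.1, u z.2) / p z)
      ≤ ∑ e : E, q e * Real.log (Q (u e) / q e) := by
    rw [Fintype.sum_prod_type_right]
    apply Finset.sum_le_sum
    intro e _
    have hb : ∀ d : D, p (d, e) ≤ S (d, u e) := by
      intro d
      simp only [hS]
      exact Finset.single_le_sum (f := fun e' => p (d, e')) (fun j _ => h0 _)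
        (by simp)
    have hsum : ∑ d : D, S (d, u e) = Q (u e) := by
      simp only [hQ, hS, hq]
      rw [Finset.sum_comm]
    calc ∑ d : D, p (d, e) * Real.log (S (d, u e) / p (d, e))
        ≤ (∑ d : D, p (d, e)) * Real.log ((∑ d : D, S (d, u e)) / (∑ d : D, p (d, e))) :=
          logSum Finset.univ _ _ (fun d _ => h0 _) (fun d _ => hb d)
      _ = q e * Real.log (Q (u e) / q e) := by rw [hsum, hq]
  rw [g1, g2] at main
  linarith

section measglue
variable {D E : Type*} [Fintype D] [MeasurableSpace D] [MeasurableSingletonClass D]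
  [Fintype E] [MeasurableSpace E] [MeasurableSingletonClass E] [DecidableEq E]

lemma meas_finset_toReal (η : Measure D) [IsFiniteMeasure η] (s : Finset D) :
    (η ↑s).toReal = ∑ d ∈ s, (η {d}).toReal := by
  have h1 : (↑s : Set D) = ⋃ d ∈ s, {d} := by
    ext x; simp
  rw [h1, measure_biUnion_finset ?_ (fun d _ => measurableSet_singleton d)]
  · exact ENNReal.toReal_sum (fun d _ => measure_ne_top η _)
  · intro a _ b _ hab
    simp [Function.onFun, Set.disjoint_singleton, hab]

lemma map_vec (u : D → E) (η : Measure D) [IsFiniteMeasure η] (e : E) :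
    ((Measure.map u η) {e}).toReal
      = ∑ d ∈ Finset.univ.filter (fun d => u d = e), (η {d}).toReal := by
  rw [Measure.map_apply (measurable_of_finite u) (measurableSet_singleton e)]
  have : u ⁻¹' {e} = ↑(Finset.univ.filter (fun d => u d = e)) := by
    ext x; simp
  rw [this, meas_finset_toReal]

lemma shannon_eq (η : Measure D) :
    shannonEntropy η = ∑ d, Real.negMulLog ((η {d}).toReal) := by
  rw [shannonEntropy, ← Finset.sum_neg_distrib]
  exact Finset.sum_congr rfl (fun d _ => by rw [Real.negMulLog]; ring)

lemma sum_vec_eq_one (η : Measure D) [IsProbabilityMeasure η] :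
    ∑ d, (η {d}).toReal = 1 := by
  have := meas_finset_toReal η Finset.univ
  rw [← this]
  simp

end measglue

section ent
variable {D E E' : Type*} [Fintype D] [MeasurableSpace D] [MeasurableSingletonClass D]
  [DecidableEq D]
  [Fintype E] [MeasurableSpace E] [MeasurableSingletonClass E] [DecidableEq E]
  [Fintype E'] [MeasurableSpace E'] [MeasurableSingletonClass E'] [DecidableEq E']

-- gather, fiber_prod_fst, fiber_prod_usnd, fiber_prod_snd, dpVec

lemma vec_le_one (η : Measure D) [IsProbabilityMeasure η] (d : D) : (η {d}).toReal ≤ 1 := by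
  have h1 : η {d} ≤ 1 := prob_le_one
  exact ENNReal.toReal_le_of_le_ofReal one_pos.le (by simpa using h1)

lemma shannonEntropy_nonneg (η : Measure D) [IsProbabilityMeasure η] :
    0 ≤ shannonEntropy η := by
  rw [shannon_eq]
  exact Finset.sum_nonneg fun d _ =>
    Real.negMulLog_nonneg ENNReal.toReal_nonneg (vec_le_one η d)

lemma shannonEntropy_le_log_card (η : Measure D) [IsProbabilityMeasure η] :
    shannonEntropy η ≤ Real.log (Fintype.card D) := by
  rw [shannon_eq]
  have h1 : ∀ d : D, Real.negMulLog ((η {d}).toReal)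
      = (η {d}).toReal * Real.log (1 / (η {d}).toReal) := by
    intro d
    rw [one_div, Real.log_inv, Real.negMulLog]
    ring
  rw [Finset.sum_congr rfl (fun d _ => h1 d)]
  have := logSum Finset.univ (fun d : D => (η {d}).toReal) (fun _ => 1)
    (fun d _ => ENNReal.toReal_nonneg) (fun d _ => vec_le_one η d)
  rw [sum_vec_eq_one] at this
  simpa using this

lemma shannonEntropy_map_le (u : D → E) (η : Measure D) [IsFiniteMeasure η] :
    shannonEntropy (Measure.map u η) ≤ shannonEntropy η := by
  rw [shannon_eq, shannon_eq]
  calc ∑ e, Real.negMulLog (((Measure.map u η) {e}).toReal)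
      = ∑ e, Real.negMulLog (∑ d ∈ Finset.univ.filter (fun d => u d = e), (η {d}).toReal) := by
        exact Finset.sum_congr rfl (fun e _ => by rw [map_vec])
    _ ≤ ∑ e, ∑ d ∈ Finset.univ.filter (fun d => u d = e), Real.negMulLog ((η {d}).toReal) :=
        Finset.sum_le_sum (fun e _ =>
          negMulLog_sum_le _ _ (fun d _ => ENNReal.toReal_nonneg))
    _ = ∑ d, Real.negMulLog ((η {d}).toReal) :=
        Finset.sum_fiberwise Finset.univ u _

lemma shannon_dp_meas (u : E → E') (η : Measure (D × E)) [IsFiniteMeasure η] :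
    shannonEntropy η + shannonEntropy (Measure.map (fun z : D × E => u z.2) η)
      ≤ shannonEntropy (Measure.map (fun z : D × E => (z.1, u z.2)) η)
        + shannonEntropy (Measure.map (fun z : D × E => z.2) η) := by
  set p : D × E → ℝ := fun z => (η {z}).toReal with hp
  have h0 : ∀ z, 0 ≤ p z := fun z => ENNReal.toReal_nonneg
  have e1 : shannonEntropy η = ∑ z : D × E, Real.negMulLog (p z) := shannon_eq η
  have e2 : shannonEntropy (Measure.map (fun z : D × E => u z.2) η)
      = ∑ e' : E', Real.negMulLog (∑ e ∈ Finset.univ.filter (fun e => u e = e'),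
          ∑ d : D, p (d, e)) := by
    rw [shannon_eq]
    refine Finset.sum_congr rfl (fun e' _ => ?_)
    rw [map_vec (fun z : D × E => u z.2) η e', fiber_prod_usnd]
  have e3 : shannonEntropy (Measure.map (fun z : D × E => (z.1, u z.2)) η)
      = ∑ y : D × E', Real.negMulLog
          (∑ e ∈ Finset.univ.filter (fun e => u e = y.2), p (y.1, e)) := by
    rw [shannon_eq]
    refine Finset.sum_congr rfl (fun y _ => ?_)
    rw [map_vec (fun z : D × E => (z.1, u z.2)) η y, fiber_prod_fst]
  have e4 : shannonEntropy (Measure.map (fun z : D × E => z.2) η)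
      = ∑ e : E, Real.negMulLog (∑ d : D, p (d, e)) := by
    rw [shannon_eq]
    refine Finset.sum_congr rfl (fun e _ => ?_)
    rw [map_vec (fun z : D × E => z.2) η e, fiber_prod_snd]
  rw [e1, e2, e3, e4]
  exact dpVec u p h0

end ent

section obs
variable {X : Type*} [MeasurableSpace X] (μ : Measure X) [IsProbabilityMeasure μ]
variable {D E E' : Type*} [Fintype D] [MeasurableSpace D] [MeasurableSingletonClass D]
  [DecidableEq D]
  [Fintype E] [MeasurableSpace E] [MeasurableSingletonClass E] [DecidableEq E]
  [Fintype E'] [MeasurableSpace E'] [MeasurableSingletonClass E'] [DecidableEq E']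

lemma obsEntropy_comp_le {α : X → D} (hα : Measurable α) (u : D → E) :
    obsEntropy μ (fun x => u (α x)) ≤ obsEntropy μ α := by
  unfold obsEntropy
  rw [show (fun x => u (α x)) = u ∘ α from rfl,
    ← Measure.map_map (measurable_of_finite u) hα]
  haveI : IsProbabilityMeasure (Measure.map α μ) :=
    Measure.isProbabilityMeasure_map hα.aemeasurable
  exact shannonEntropy_map_le u _

lemma obsEntropy_eq_of_inv {α : X → D} {β : X → E} (hα : Measurable α) (hβ : Measurable β)
    (u : D → E) (v : E → D) (hu : ∀ x, u (α x) = β x) (hv : ∀ x, v (β x) = α x) :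
    obsEntropy μ α = obsEntropy μ β := by
  apply le_antisymm
  · have h := obsEntropy_comp_le μ hβ v
    rw [show (fun x => v (β x)) = α from funext hv] at h
    exact h
  · have h := obsEntropy_comp_le μ hα u
    rw [show (fun x => u (α x)) = β from funext hu] at h
    exact h

lemma obsEntropy_nonneg {α : X → D} (hα : Measurable α) : 0 ≤ obsEntropy μ α := by
  haveI : IsProbabilityMeasure (Measure.map α μ) :=
    Measure.isProbabilityMeasure_map hα.aemeasurable
  exact shannonEntropy_nonneg _

lemma obsEntropy_le_log_card {α : X → D} (hα : Measurable α) :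
    obsEntropy μ α ≤ Real.log (Fintype.card D) := by
  haveI : IsProbabilityMeasure (Measure.map α μ) :=
    Measure.isProbabilityMeasure_map hα.aemeasurable
  exact shannonEntropy_le_log_card _

lemma condObs_dp {α : X → D} {β : X → E} (hα : Measurable α) (hβ : Measurable β) (u : E → E') :
    obsEntropy μ (fun x => (α x, β x)) - obsEntropy μ β
      ≤ obsEntropy μ (fun x => (α x, u (β x))) - obsEntropy μ (fun x => u (β x)) := by
  have hpair : Measurable (fun x => (α x, β x)) := hα.prodMk hβ
  have h := shannon_dp_meas u (Measure.map (fun x => (α x, β x)) μ)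
  rw [Measure.map_map (measurable_of_finite _) hpair,
    Measure.map_map (measurable_of_finite _) hpair,
    Measure.map_map (measurable_of_finite _) hpair] at h
  have e1 : ((fun z : D × E => u z.2) ∘ fun x => (α x, β x)) = fun x => u (β x) := rfl
  have e2 : ((fun z : D × E => (z.1, u z.2)) ∘ fun x => (α x, β x))
      = fun x => (α x, u (β x)) := rfl
  have e3 : ((fun z : D × E => z.2) ∘ fun x => (α x, β x)) = β := rfl
  rw [e1, e2, e3] at h
  unfold obsEntropy
  linarith [h]

end obs

section chain
variable {X : Type*} [MeasurableSpace X] (μ : Measure X) [IsProbabilityMeasure μ]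
variable {D E : Type*} [Fintype D] [MeasurableSpace D] [MeasurableSingletonClass D]
  [DecidableEq D]
  [Fintype E] [MeasurableSpace E] [MeasurableSingletonClass E] [DecidableEq E]
variable {ι : Type*} [Fintype ι] [DecidableEq ι]

lemma chainObs {f : ι → X → D} (hf : ∀ i, Measurable (f i)) {Ψ : X → E}
    (hΨ : Measurable Ψ) (T : Finset ι) :
    obsEntropy μ (fun x => ((fun s : {i // i ∈ T} => f s.1 x), Ψ x)) - obsEntropy μ Ψ
      ≤ ∑ i ∈ T, (obsEntropy μ (fun x => (f i x, Ψ x)) - obsEntropy μ Ψ) := by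
  classical
  induction T using Finset.induction_on with
  | empty =>
      rw [Finset.sum_empty]
      have : obsEntropy μ (fun x => ((fun s : {i // i ∈ (∅ : Finset ι)} => f s.1 x), Ψ x))
          = obsEntropy μ Ψ := by
        apply obsEntropy_eq_of_inv μ ?_ hΨ Prod.snd
          (fun e => ((fun s : {i // i ∈ (∅ : Finset ι)} =>
            absurd s.2 (Finset.notMem_empty s.1)), e))
        · intro x; rfl
        · intro x
          refine Prod.ext ?_ rfl
          funext s
          exact absurd s.2 (Finset.notMem_empty s.1)
        · exact Measurable.prodMk
            (measurable_pi_lambda _ (fun s => absurd s.2 (Finset.notMem_empty s.1))) hΨ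
      rw [this]
      simp
  | @insert a T ha IH =>
      have hpairT : Measurable (fun x => ((fun s : {i // i ∈ T} => f s.1 x), Ψ x)) :=
        (measurable_pi_lambda _ (fun (s : {i // i ∈ T}) => hf s.1)).prodMk hΨ
      have hins : Measurable (fun x => ((fun s : {i // i ∈ insert a T} => f s.1 x), Ψ x)) :=
        (measurable_pi_lambda _ (fun (s : {i // i ∈ insert a T}) => hf s.1)).prodMk hΨ
      have key : obsEntropy μ (fun x => ((fun s : {i // i ∈ insert a T} => f s.1 x), Ψ x))
          = obsEntropy μ (fun x => (f a x,
              ((fun s : {i // i ∈ T} => f s.1 x), Ψ x))) := by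
        apply obsEntropy_eq_of_inv μ hins ((hf a).prodMk hpairT)
          (fun z => (z.1 ⟨a, Finset.mem_insert_self a T⟩,
            ((fun s : {i // i ∈ T} => z.1 ⟨s.1, Finset.mem_insert_of_mem s.2⟩), z.2)))
          (fun w => ((fun s : {i // i ∈ insert a T} =>
            if h : s.1 = a then w.1 else w.2.1 ⟨s.1, Finset.mem_of_mem_insert_of_ne s.2 h⟩),
            w.2.2))
        · intro x; rfl
        · intro x
          refine Prod.ext ?_ rfl
          funext s
          by_cases h : s.1 = a
          · simp [h]
          · simp [h]
      have step : obsEntropy μ (fun x => (f a x,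
            ((fun s : {i // i ∈ T} => f s.1 x), Ψ x)))
          - obsEntropy μ (fun x => ((fun s : {i // i ∈ T} => f s.1 x), Ψ x))
          ≤ obsEntropy μ (fun x => (f a x, Ψ x)) - obsEntropy μ Ψ := by
        have h := condObs_dp μ (hf a) hpairT
          (Prod.snd : (({i // i ∈ T} → D) × E) → E)
        exact h
      rw [Finset.sum_insert ha, key]
      linarith [IH]

end chain

section fU
variable {D E : Type*} [Fintype D] [Fintype E] [DecidableEq E]

/-- Entropy of the pushforward of the probability vector `p` under `u`. -/
noncomputable def fU (u : D → E) (p : D → ℝ) : ℝ :=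
  ∑ e : E, Real.negMulLog (∑ d ∈ Finset.univ.filter (fun d => u d = e), p d)

lemma fU_cont (u : D → E) {ε : ℝ} (hε : 0 < ε) :
    ∃ δ > 0, ∀ p q : D → ℝ, p ∈ Set.Icc (0 : D → ℝ) 1 → q ∈ Set.Icc (0 : D → ℝ) 1 →
      dist p q < δ → |fU u p - fU u q| < ε := by
  have hcomp : IsCompact (Set.Icc (0 : D → ℝ) 1) := isCompact_Icc
  have hcont : Continuous (fU u) := by
    apply continuous_finset_sum
    intro e _
    exact Real.continuous_negMulLog.comp (continuous_finset_sum _ (fun d _ => continuous_apply d))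
  have huc := hcomp.uniformContinuousOn_of_continuous hcont.continuousOn
  rw [Metric.uniformContinuousOn_iff] at huc
  obtain ⟨δ, hδ, h⟩ := huc ε hε
  refine ⟨δ, hδ, fun p q hp hq hd => ?_⟩
  have := h p hp q hq hd
  rwa [Real.dist_eq] at this

end fU

section ident
variable {X : Type*} [MeasurableSpace X] (μ : Measure X) [IsProbabilityMeasure μ]
variable {D E : Type*} [Fintype D] [MeasurableSpace D] [MeasurableSingletonClass D]
  [DecidableEq D]
  [Fintype E] [MeasurableSpace E] [MeasurableSingletonClass E] [DecidableEq E]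

lemma obsEntropy_comp_eq_fU {π : X → D} (hπ : Measurable π) (u : D → E) :
    obsEntropy μ (fun x => u (π x)) = fU u (fun d => ((Measure.map π μ) {d}).toReal) := by
  unfold obsEntropy fU
  rw [show (fun x => u (π x)) = u ∘ π from rfl, ← Measure.map_map (measurable_of_finite u) hπ]
  haveI : IsProbabilityMeasure (Measure.map π μ) := Measure.isProbabilityMeasure_map hπ.aemeasurable
  rw [shannon_eq]
  exact Finset.sum_congr rfl (fun e _ => by rw [map_vec])

lemma vec_mem_Icc (η : Measure D) [IsProbabilityMeasure η] :
    (fun d => (η {d}).toReal) ∈ Set.Icc (0 : D → ℝ) 1 := by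
  constructor
  · intro d; exact ENNReal.toReal_nonneg
  · intro d; exact vec_le_one η d

end ident

lemma dist_vec_le_tv {D : Type*} [Fintype D] [MeasurableSpace D]
    (η₁ η₂ : Measure D) :
    dist (fun d => ((η₁ : Measure D) {d}).toReal) (fun d => (η₂ {d}).toReal)
      ≤ 2 * tvDist η₁ η₂ := by
  have htv : 0 ≤ tvDist η₁ η₂ := by
    rw [tvDist]
    have : (0:ℝ) ≤ ∑ d : D, |(η₁ {d}).toReal - (η₂ {d}).toReal| :=
      Finset.sum_nonneg (fun d _ => abs_nonneg _)
    linarith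
  rw [dist_pi_le_iff (by linarith)]
  intro d
  rw [Real.dist_eq]
  have h1 : |(η₁ {d}).toReal - (η₂ {d}).toReal|
      ≤ ∑ d' : D, |(η₁ {d'}).toReal - (η₂ {d'}).toReal| :=
    Finset.single_le_sum (f := fun d' => |(η₁ {d'}).toReal - (η₂ {d'}).toReal|)
      (fun d' _ => abs_nonneg _) (Finset.mem_univ d)
  rw [tvDist]
  linarith

section mainIneq
variable {X : Type*} [MeasurableSpace X] (μ : Measure X) [IsProbabilityMeasure μ]
variable {B' : Type*} [Fintype B'] [MeasurableSpace B'] [MeasurableSingletonClass B']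
  [DecidableEq B']
variable {ι : Type*} [Fintype ι] [DecidableEq ι]

lemma mainIneq (f k : ι → X → B') (hf : ∀ i, Measurable (f i)) (hk : ∀ i, Measurable (k i))
    (T : Finset ι) :
    obsEntropy μ (fun x => (fun s : {i // i ∈ T} => f s.1 x))
      ≤ obsEntropy μ (fun x => (fun s : {i // i ∈ T} => k s.1 x))
        + ∑ i ∈ T, (obsEntropy μ (fun x => (f i x, k i x)) - obsEntropy μ (k i)) := by
  classical
  set Ψ : X → ({i // i ∈ T} → B') := fun x => (fun s : {i // i ∈ T} => k s.1 x) with hΨdef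
  have hΨ : Measurable Ψ := measurable_pi_lambda _ (fun s => hk s.1)
  have hΦpair : Measurable (fun x => ((fun s : {i // i ∈ T} => f s.1 x), Ψ x)) :=
    (measurable_pi_lambda _ (fun (s : {i // i ∈ T}) => hf s.1)).prodMk hΨ
  have h1 : obsEntropy μ (fun x => (fun s : {i // i ∈ T} => f s.1 x))
      ≤ obsEntropy μ (fun x => ((fun s : {i // i ∈ T} => f s.1 x), Ψ x)) := by
    have := obsEntropy_comp_le μ hΦpair
      (Prod.fst : (({i // i ∈ T} → B') × ({i // i ∈ T} → B')) → _)
    exact this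
  have h2 := chainObs μ hf hΨ T
  have h3 : ∑ i ∈ T, (obsEntropy μ (fun x => (f i x, Ψ x)) - obsEntropy μ Ψ)
      ≤ ∑ i ∈ T, (obsEntropy μ (fun x => (f i x, k i x)) - obsEntropy μ (k i)) := by
    apply Finset.sum_le_sum
    intro i hi
    have := condObs_dp μ (hf i) hΨ (fun g : {i // i ∈ T} → B' => g ⟨i, hi⟩)
    exact this
  linarith
end mainIneq

lemma condObs_nonneg {X : Type*} [MeasurableSpace X] (μ : Measure X) [IsProbabilityMeasure μ]
    {D E : Type*} [Fintype D] [MeasurableSpace D] [MeasurableSingletonClass D]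
    [Fintype E] [MeasurableSpace E] [MeasurableSingletonClass E]
    {α : X → D} {β : X → E} (hα : Measurable α) (hβ : Measurable β) :
    0 ≤ condEntropyObs μ α β := by
  classical
  have h := obsEntropy_comp_le μ (hα.prodMk hβ) (Prod.snd : D × E → E)
  have e : (fun x => Prod.snd (α x, β x)) = β := rfl
  rw [e] at h
  unfold condEntropyObs
  linarith

lemma oneSide {G : Type*} [Group G] [DecidableEq G]
    (V : ℕ → Type*) [∀ n, Fintype (V n)] [∀ n, DecidableEq (V n)]
    (σ : ∀ n, G → Equiv.Perm (V n))
    {A B : Type*} [Fintype A] [MeasurableSpace A] [DiscreteMeasurableSpace A]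
    [Fintype B] [MeasurableSpace B] [DiscreteMeasurableSpace B]
    (μ : Measure (G → A)) [IsProbabilityMeasure μ]
    (μn : ∀ n, Measure (V n → A)) (hμn : ∀ n, IsProbabilityMeasure (μn n))
    (hconv : LocalWeakStarConverges σ μn μ)
    (F : Finset G) (θ κ : (↥F → A) → B)
    (c : ℝ) (hc : 0 < c)
    (S : ∀ n, Finset (V n)) (hS : ∀ n, c * (Fintype.card (V n) : ℝ) ≤ ((S n).card : ℝ))
    (ε : ℝ) (hε : 0 < ε) :
    ∀ᶠ n in atTop,
      obsEntropy (μn n) (fun x (s : ↥(S n)) => θ (fun g : ↥F => x (σ n g.1 s.1)))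
        ≤ obsEntropy (μn n) (fun x (s : ↥(S n)) => κ (fun g : ↥F => x (σ n g.1 s.1)))
          + ((S n).card : ℝ) *
            (condEntropyObs μ (fun a => θ (fun g : ↥F => a g.1))
               (fun a => κ (fun g : ↥F => a g.1)) + ε) := by
  classical
  -- the μ-side marginal on A^F
  have hπFm : Measurable (fun (a : G → A) (g : ↥F) => a g.1) :=
    measurable_pi_lambda _ (fun g => measurable_pi_apply g.1)
  haveI : IsProbabilityMeasure (Measure.map (fun (a : G → A) (g : ↥F) => a g.1) μ) :=
    Measure.isProbabilityMeasure_map hπFm.aemeasurable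
  set q0 : (↥F → A) → ℝ :=
    fun d => ((Measure.map (fun (a : G → A) (g : ↥F) => a g.1) μ) {d}).toReal with hq0def
  have hq0mem : q0 ∈ Set.Icc (0 : (↥F → A) → ℝ) 1 := vec_mem_Icc _
  set C1 : ℝ := condEntropyObs μ (fun a => θ (fun g : ↥F => a g.1))
    (fun a => κ (fun g : ↥F => a g.1)) with hC1def
  have hφm : Measurable (fun (a : G → A) => θ (fun g : ↥F => a g.1)) :=
    (measurable_of_finite θ).comp hπFm
  have hψm : Measurable (fun (a : G → A) => κ (fun g : ↥F => a g.1)) :=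
    (measurable_of_finite κ).comp hπFm
  have hC1nonneg : 0 ≤ C1 := condObs_nonneg μ hφm hψm
  have hC1eq : C1 = fU (fun y => (θ y, κ y)) q0 - fU κ q0 := by
    have e1 : obsEntropy μ (fun a => (θ (fun g : ↥F => a g.1), κ (fun g : ↥F => a g.1)))
        = fU (fun y => (θ y, κ y)) q0 :=
      obsEntropy_comp_eq_fU μ hπFm (fun y => (θ y, κ y))
    have e2 : obsEntropy μ (fun a => κ (fun g : ↥F => a g.1)) = fU κ q0 :=
      obsEntropy_comp_eq_fU μ hπFm κ
    rw [hC1def, condEntropyObs, e2, ← e1]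
  set M : ℝ := Real.log (Fintype.card (B × B)) with hMdef
  have hM0 : 0 ≤ M := by
    rcases Nat.eq_zero_or_pos (Fintype.card (B × B)) with h | h
    · rw [hMdef, h]; simp
    · exact Real.log_nonneg (by exact_mod_cast h)
  obtain ⟨δ₁, hδ₁, hcont1⟩ := fU_cont (D := ↥F → A) (fun y => (θ y, κ y)) (ε := ε/4)
    (by positivity)
  obtain ⟨δ₂, hδ₂, hcont2⟩ := fU_cont (D := ↥F → A) (E := B) κ (ε := ε/4) (by positivity)
  set δ : ℝ := min (min δ₁ δ₂ / 3) (ε * c / (4 * (M + 1))) with hδdef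
  have hδpos : 0 < δ := by
    apply lt_min
    · have := lt_min hδ₁ hδ₂; linarith
    · positivity
  filter_upwards [hconv F δ hδpos] with n hn
  haveI := hμn n
  -- observables on V n → A
  set f : V n → (V n → A) → B := fun v x => θ (fun g : ↥F => x (σ n g.1 v)) with hfdef
  set k : V n → (V n → A) → B := fun v x => κ (fun g : ↥F => x (σ n g.1 v)) with hkdef
  have hfm : ∀ v, Measurable (f v) := fun v => measurable_of_finite _
  have hkm : ∀ v, Measurable (k v) := fun v => measurable_of_finite _
  have hmain := mainIneq (μn n) f k hfm hkm (S n)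
  -- the good-vertex property
  set P : V n → Prop := fun v =>
    tvDist (Measure.map (fun (x : V n → A) (g : ↥F) => x (σ n g.1 v)) (μn n))
      (Measure.map (fun (a : G → A) (g : ↥F) => a g.1) μ) < δ with hPdef
  -- per-vertex bounds
  have htermM : ∀ v : V n,
      obsEntropy (μn n) (fun x => (f v x, k v x)) - obsEntropy (μn n) (k v) ≤ M := by
    intro v
    have h1 : obsEntropy (μn n) (fun x => (f v x, k v x)) ≤ M := by
      rw [hMdef]
      exact obsEntropy_le_log_card (μn n) ((hfm v).prodMk (hkm v))
    have h2 : 0 ≤ obsEntropy (μn n) (k v) := obsEntropy_nonneg (μn n) (hkm v)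
    linarith
  have htermGood : ∀ v : V n, P v →
      obsEntropy (μn n) (fun x => (f v x, k v x)) - obsEntropy (μn n) (k v)
        ≤ C1 + ε/2 := by
    intro v hPv
    have hπvm : Measurable (fun (x : V n → A) (g : ↥F) => x (σ n g.1 v)) :=
      measurable_of_finite _
    haveI : IsProbabilityMeasure
        (Measure.map (fun (x : V n → A) (g : ↥F) => x (σ n g.1 v)) (μn n)) :=
      Measure.isProbabilityMeasure_map hπvm.aemeasurable
    set pv : (↥F → A) → ℝ := fun d =>
      ((Measure.map (fun (x : V n → A) (g : ↥F) => x (σ n g.1 v)) (μn n)) {d}).toReal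
      with hpvdef
    have hpvmem : pv ∈ Set.Icc (0 : (↥F → A) → ℝ) 1 := vec_mem_Icc _
    have e1 : obsEntropy (μn n) (fun x => (f v x, k v x)) = fU (fun y => (θ y, κ y)) pv :=
      obsEntropy_comp_eq_fU (μn n) hπvm (fun y => (θ y, κ y))
    have e2 : obsEntropy (μn n) (k v) = fU κ pv :=
      obsEntropy_comp_eq_fU (μn n) hπvm κ
    have hdist : dist pv q0 < min δ₁ δ₂ := by
      have h2tv := dist_vec_le_tv
        (Measure.map (fun (x : V n → A) (g : ↥F) => x (σ n g.1 v)) (μn n))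
        (Measure.map (fun (a : G → A) (g : ↥F) => a g.1) μ)
      have hδle : δ ≤ min δ₁ δ₂ / 3 := min_le_left _ _
      have hmpos : 0 < min δ₁ δ₂ := lt_min hδ₁ hδ₂
      calc dist pv q0 ≤ 2 * tvDist _ _ := h2tv
        _ < 2 * δ := by have := hPv; rw [hPdef] at this; linarith
        _ ≤ 2 * (min δ₁ δ₂ / 3) := by linarith
        _ < min δ₁ δ₂ := by linarith
    have hb1 : |fU (fun y => (θ y, κ y)) pv - fU (fun y => (θ y, κ y)) q0| < ε/4 :=
      hcont1 pv q0 hpvmem hq0mem (lt_of_lt_of_le hdist (min_le_left _ _))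
    have hb2 : |fU κ pv - fU κ q0| < ε/4 :=
      hcont2 pv q0 hpvmem hq0mem (lt_of_lt_of_le hdist (min_le_right _ _))
    rw [e1, e2, hC1eq]
    have := abs_lt.mp hb1
    have := abs_lt.mp hb2
    cases abs_lt.mp hb1 with | intro l1 r1 =>
    cases abs_lt.mp hb2 with | intro l2 r2 =>
    linarith
  -- counting good and bad vertices
  have hjcount : Nat.card {v : V n // P v} = (Finset.univ.filter P).card := by
    rw [Nat.card_eq_fintype_card]
    exact Fintype.card_subtype P
  have hgood : (1 - δ) * (Fintype.card (V n) : ℝ) ≤ ((Finset.univ.filter P).card : ℝ) := by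
    rw [hjcount] at hn
    exact_mod_cast hn
  have hcount : ((Finset.univ.filter P).card : ℝ)
      + ((Finset.univ.filter (fun v => ¬ P v)).card : ℝ) = (Fintype.card (V n) : ℝ) := by
    have := Finset.card_filter_add_card_filter_not (p := P) (s := Finset.univ)
    rw [Finset.card_univ] at this
    exact_mod_cast this
  have hbad : ((Finset.univ.filter (fun v => ¬ P v)).card : ℝ)
      ≤ δ * (Fintype.card (V n) : ℝ) := by linarith
  -- splitting the sum
  have hsplit : ∑ v ∈ S n, (obsEntropy (μn n) (fun x => (f v x, k v x))
        - obsEntropy (μn n) (k v))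
      = (∑ v ∈ (S n).filter P, (obsEntropy (μn n) (fun x => (f v x, k v x))
          - obsEntropy (μn n) (k v)))
        + ∑ v ∈ (S n).filter (fun v => ¬ P v), (obsEntropy (μn n) (fun x => (f v x, k v x))
          - obsEntropy (μn n) (k v)) :=
    (Finset.sum_filter_add_sum_filter_not (S n) P _).symm
  have hsum1 : ∑ v ∈ (S n).filter P, (obsEntropy (μn n) (fun x => (f v x, k v x))
        - obsEntropy (μn n) (k v)) ≤ (((S n).filter P).card : ℝ) * (C1 + ε/2) := by
    have := Finset.sum_le_card_nsmul ((S n).filter P) _ (C1 + ε/2)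
      (fun v hv => htermGood v (Finset.mem_filter.mp hv).2)
    rwa [nsmul_eq_mul] at this
  have hsum2 : ∑ v ∈ (S n).filter (fun v => ¬ P v),
        (obsEntropy (μn n) (fun x => (f v x, k v x)) - obsEntropy (μn n) (k v))
      ≤ ((((S n).filter (fun v => ¬ P v)).card : ℝ)) * M := by
    have := Finset.sum_le_card_nsmul ((S n).filter (fun v => ¬ P v)) _ M
      (fun v _ => htermM v)
    rwa [nsmul_eq_mul] at this
  have hc1 : (((S n).filter P).card : ℝ) ≤ ((S n).card : ℝ) := by
    exact_mod_cast Finset.card_filter_le (S n) P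
  have hc2 : ((((S n).filter (fun v => ¬ P v)).card : ℝ))
      ≤ ((Finset.univ.filter (fun v => ¬ P v)).card : ℝ) := by
    exact_mod_cast Finset.card_le_card
      (Finset.filter_subset_filter _ (Finset.subset_univ (S n)))
  -- bound the bad contribution
  have hδle2 : δ ≤ ε * c / (4 * (M + 1)) := min_le_right _ _
  have hcard0 : (0 : ℝ) ≤ (Fintype.card (V n) : ℝ) := Nat.cast_nonneg _
  have hbadbound : δ * (Fintype.card (V n) : ℝ) * M ≤ ε/2 * ((S n).card : ℝ) := by
    have t1 : δ * ((Fintype.card (V n) : ℝ) * M)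
        ≤ (ε * c / (4 * (M + 1))) * ((Fintype.card (V n) : ℝ) * M) :=
      mul_le_mul_of_nonneg_right hδle2 (by positivity)
    have t1' : δ * (Fintype.card (V n) : ℝ) * M
        ≤ (ε * c / (4 * (M + 1))) * ((Fintype.card (V n) : ℝ) * M) := by
      rw [mul_assoc]; exact t1
    have hpos2 : (0:ℝ) ≤ ε * c * (Fintype.card (V n) : ℝ) / (4 * (M + 1)) := by positivity
    have t2 : (ε * c / (4 * (M + 1))) * ((Fintype.card (V n) : ℝ) * M)
        ≤ ε * c * (Fintype.card (V n) : ℝ) / 4 := by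
      rw [div_mul_eq_mul_div, div_le_div_iff₀ (by positivity) (by norm_num)]
      nlinarith only [mul_nonneg (mul_nonneg hε.le hc.le) hcard0, hM0]
    have t3 : ε * c * (Fintype.card (V n) : ℝ) / 4 ≤ ε/4 * ((S n).card : ℝ) := by
      have h := hS n
      have h2 := mul_le_mul_of_nonneg_left h (le_of_lt (show (0:ℝ) < ε/4 by linarith))
      calc ε * c * (Fintype.card (V n) : ℝ) / 4
          = ε/4 * (c * (Fintype.card (V n) : ℝ)) := by ring
        _ ≤ ε/4 * ((S n).card : ℝ) := h2
    have hS0 : (0:ℝ) ≤ ((S n).card : ℝ) := Nat.cast_nonneg _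
    have t4 : ε/4 * ((S n).card : ℝ) ≤ ε/2 * ((S n).card : ℝ) := by nlinarith only [hε, hS0]
    linarith only [t1', t2, t3, t4]
  -- put everything together
  have hterm_nonneg : 0 ≤ C1 + ε/2 := by linarith
  have total : ∑ v ∈ S n, (obsEntropy (μn n) (fun x => (f v x, k v x))
        - obsEntropy (μn n) (k v))
      ≤ ((S n).card : ℝ) * (C1 + ε) := by
    rw [hsplit]
    have b1 : (((S n).filter P).card : ℝ) * (C1 + ε/2) ≤ ((S n).card : ℝ) * (C1 + ε/2) :=
      mul_le_mul_of_nonneg_right hc1 hterm_nonneg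
    have b2 : ((((S n).filter (fun v => ¬ P v)).card : ℝ)) * M
        ≤ δ * (Fintype.card (V n) : ℝ) * M := by
      apply mul_le_mul_of_nonneg_right _ hM0
      linarith only [hc2, hbad]
    linarith only [hsum1, hsum2, b1, b2, hbadbound]
  calc obsEntropy (μn n) (fun x (s : ↥(S n)) => θ (fun g : ↥F => x (σ n g.1 s.1)))
      ≤ obsEntropy (μn n) (fun x (s : ↥(S n)) => κ (fun g : ↥F => x (σ n g.1 s.1)))
        + ∑ v ∈ S n, (obsEntropy (μn n) (fun x => (f v x, k v x))
            - obsEntropy (μn n) (k v)) := hmain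
    _ ≤ _ := by linarith only [total]

end AUX

theorem stmt7 {G : Type*} [Group G] [Countable G] [DecidableEq G]
    (V : ℕ → Type*) [∀ n, Fintype (V n)] [∀ n, DecidableEq (V n)]
    (σ : ∀ n, G → Equiv.Perm (V n)) (hσ : IsSoficApprox σ)
    (A B : Type*) [Fintype A] [MeasurableSpace A] [DiscreteMeasurableSpace A]
    [Fintype B] [MeasurableSpace B] [DiscreteMeasurableSpace B]
    (μ : Measure (G → A)) [IsProbabilityMeasure μ]
    (hinv : ∀ g : G, Measure.map (fun (a : G → A) (k : G) => a (k * g)) μ = μ)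
    (μn : ∀ n, Measure (V n → A)) (hμn : ∀ n, IsProbabilityMeasure (μn n))
    (hconv : LocalWeakStarConverges σ μn μ)
    (F : Finset G) (θ κ : (↥F → A) → B)
    -- `φ = θ ∘ π_F` and `ψ = κ ∘ π_F` are the corresponding `F`-local observables.
    (c : ℝ) (hc : 0 < c)
    (S : ∀ n, Finset (V n)) (hS : ∀ n, c * (Fintype.card (V n) : ℝ) ≤ ((S n).card : ℝ)) :
    ∀ ε : ℝ, 0 < ε → ∀ᶠ n in atTop,
      (1 / ((S n).card : ℝ)) *
          |shannonEntropy (Measure.map (fun (b : V n → B) (s : ↥(S n)) => b s.1)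
              (Measure.map (fun (x : V n → A) (v : V n) => θ (fun g : ↥F => x (σ n g.1 v)))
                (μn n))) -
            shannonEntropy (Measure.map (fun (b : V n → B) (s : ↥(S n)) => b s.1)
              (Measure.map (fun (x : V n → A) (v : V n) => κ (fun g : ↥F => x (σ n g.1 v)))
                (μn n)))| ≤
        rokDist μ (fun a => θ (fun g : ↥F => a g.1)) (fun a => κ (fun g : ↥F => a g.1)) + ε := by
  classical
  intro ε hε
  have hhalf : (0:ℝ) < ε/2 := by linarith
  have h1 := oneSide V σ μ μn hμn hconv F θ κ c hc S hS (ε/2) hhalf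
  have h2 := oneSide V σ μ μn hμn hconv F κ θ c hc S hS (ε/2) hhalf
  have h3 : ∀ᶠ n in atTop, 1 ≤ Fintype.card (V n) := hσ.1.eventually (eventually_ge_atTop 1)
  filter_upwards [h1, h2, h3] with n e1 e2 e3
  have hSpos : (0:ℝ) < ((S n).card : ℝ) := by
    have hV1 : (1:ℝ) ≤ (Fintype.card (V n) : ℝ) := by exact_mod_cast e3
    nlinarith only [hS n, hc, hV1]
  have hproj : Measurable (fun (b : V n → B) (s : ↥(S n)) => b s.1) := measurable_of_finite _
  have hθmap : Measurable (fun (x : V n → A) (v : V n) => θ (fun g : ↥F => x (σ n g.1 v))) :=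
    measurable_of_finite _
  have hκmap : Measurable (fun (x : V n → A) (v : V n) => κ (fun g : ↥F => x (σ n g.1 v))) :=
    measurable_of_finite _
  have g1 : shannonEntropy (Measure.map (fun (b : V n → B) (s : ↥(S n)) => b s.1)
        (Measure.map (fun (x : V n → A) (v : V n) => θ (fun g : ↥F => x (σ n g.1 v))) (μn n)))
      = obsEntropy (μn n) (fun x (s : ↥(S n)) => θ (fun g : ↥F => x (σ n g.1 s.1))) := by
    rw [Measure.map_map hproj hθmap]
    rfl
  have g2 : shannonEntropy (Measure.map (fun (b : V n → B) (s : ↥(S n)) => b s.1)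
        (Measure.map (fun (x : V n → A) (v : V n) => κ (fun g : ↥F => x (σ n g.1 v))) (μn n)))
      = obsEntropy (μn n) (fun x (s : ↥(S n)) => κ (fun g : ↥F => x (σ n g.1 s.1))) := by
    rw [Measure.map_map hproj hκmap]
    rfl
  rw [g1, g2]
  have hπFm : Measurable (fun (a : G → A) (g : ↥F) => a g.1) :=
    measurable_pi_lambda _ (fun g => measurable_pi_apply g.1)
  have hφm : Measurable (fun (a : G → A) => θ (fun g : ↥F => a g.1)) :=
    (measurable_of_finite θ).comp hπFm
  have hψm : Measurable (fun (a : G → A) => κ (fun g : ↥F => a g.1)) :=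
    (measurable_of_finite κ).comp hπFm
  have hC1 : 0 ≤ condEntropyObs μ (fun a => θ (fun g : ↥F => a g.1))
      (fun a => κ (fun g : ↥F => a g.1)) := condObs_nonneg μ hφm hψm
  have hC2 : 0 ≤ condEntropyObs μ (fun a => κ (fun g : ↥F => a g.1))
      (fun a => θ (fun g : ↥F => a g.1)) := condObs_nonneg μ hψm hφm
  have hrok : rokDist μ (fun a => θ (fun g : ↥F => a g.1)) (fun a => κ (fun g : ↥F => a g.1))
      = condEntropyObs μ (fun a => θ (fun g : ↥F => a g.1)) (fun a => κ (fun g : ↥F => a g.1))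
        + condEntropyObs μ (fun a => κ (fun g : ↥F => a g.1))
            (fun a => θ (fun g : ↥F => a g.1)) := rfl
  set X := obsEntropy (μn n) (fun x (s : ↥(S n)) => θ (fun g : ↥F => x (σ n g.1 s.1))) with hX
  set Y := obsEntropy (μn n) (fun x (s : ↥(S n)) => κ (fun g : ↥F => x (σ n g.1 s.1))) with hY
  set R := rokDist μ (fun a => θ (fun g : ↥F => a g.1)) (fun a => κ (fun g : ↥F => a g.1))
    with hR
  have habs : |X - Y| ≤ ((S n).card : ℝ) * (R + ε) := by
    rw [abs_sub_le_iff]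
    constructor
    · have b1 : X - Y ≤ ((S n).card : ℝ) *
          (condEntropyObs μ (fun a => θ (fun g : ↥F => a g.1))
            (fun a => κ (fun g : ↥F => a g.1)) + ε/2) := by linarith only [e1]
      have b2 : condEntropyObs μ (fun a => θ (fun g : ↥F => a g.1))
            (fun a => κ (fun g : ↥F => a g.1)) + ε/2 ≤ R + ε := by
        rw [hrok]; linarith only [hC2, hε]
      have := mul_le_mul_of_nonneg_left b2 hSpos.le
      linarith only [b1, this]
    · have b1 : Y - X ≤ ((S n).card : ℝ) *
          (condEntropyObs μ (fun a => κ (fun g : ↥F => a g.1))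
            (fun a => θ (fun g : ↥F => a g.1)) + ε/2) := by linarith only [e2]
      have b2 : condEntropyObs μ (fun a => κ (fun g : ↥F => a g.1))
            (fun a => θ (fun g : ↥F => a g.1)) + ε/2 ≤ R + ε := by
        rw [hrok]; linarith only [hC1, hε]
      have := mul_le_mul_of_nonneg_left b2 hSpos.le
      linarith only [b1, this]
  have hfin := mul_le_mul_of_nonneg_left habs
    (show (0:ℝ) ≤ 1 / ((S n).card : ℝ) by positivity)
  calc (1 / ((S n).card : ℝ)) * |X - Y|
      ≤ (1 / ((S n).card : ℝ)) * (((S n).card : ℝ) * (R + ε)) := hfin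
    _ = R + ε := by field_simp
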